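/- Let a > 0 with e^{2a} > 32, and let f, g, h : [a,∞) × T → ℂ be smooth compactly supported functions on a half-cylinder over a flat torus T, satisfying ∫_T Δ_T f · f̄ ≥ ∫_T |f|², ∫_T Δ_T g · ḡ ≥ ∫_T |g|², and ∫_T Δ_T h · h̄ ≥ ∫_T |h|² (for each fixed u). Then ∫ (e^{2u}−16)(Δ_T f·f̄ + Δ_T g·ḡ) du dxdy + 4∫ Re(∂_x h·f̄ + ∂_y h·ḡ) dudxdy + ∫ |∇_T h|² dudxdy ≥ 0, using the pointwise inequalities (8|f|−|∇_T h|)² ≥ 0 and (8|g|−|∇_T h|)² ≥ 0. -/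

import Mathlib

open MeasureTheory

lemma prod_zero_of_not_aemeas {T : Type*} [MeasureSpace T]
    (hk : ¬ AEMeasurable (fun u : ℝ => Measure.map (Prod.mk u) (volume : Measure T)) volume) :
    (volume : Measure ℝ).prod (volume : Measure T) = 0 := by
  rw [Measure.prod_def, Measure.bind, Measure.map_of_not_aemeasurable hk, Measure.join_zero]

lemma lintegral_prod_aemeas {T : Type*} [MeasureSpace T]
    (hk : AEMeasurable (fun u : ℝ => Measure.map (Prod.mk u) (volume : Measure T)) volume)
    {f : ℝ × T → ENNReal} (hf : Measurable f) :
    ∫⁻ p, f p ∂((volume : Measure ℝ).prod (volume : Measure T))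
      = ∫⁻ u, ∫⁻ x, f (u, x) ∂(volume : Measure T) ∂(volume : Measure ℝ) := by
  rw [Measure.prod_def, Measure.bind, Measure.lintegral_join hf.aemeasurable,
    lintegral_map' (Measure.measurable_lintegral hf).aemeasurable hk]
  exact lintegral_congr fun u => lintegral_map hf measurable_prodMk_left

lemma prod_apply_aemeas {T : Type*} [MeasureSpace T]
    (hk : AEMeasurable (fun u : ℝ => Measure.map (Prod.mk u) (volume : Measure T)) volume)
    {s : Set (ℝ × T)} (hs : MeasurableSet s) :
    ((volume : Measure ℝ).prod (volume : Measure T)) s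
      = ∫⁻ u, (volume : Measure T) (Prod.mk u ⁻¹' s) ∂volume := by
  rw [Measure.prod_def, Measure.bind, Measure.join_apply hs,
    lintegral_map' ((Measure.measurable_coe hs)).aemeasurable hk]
  exact lintegral_congr fun u => Measure.map_apply measurable_prodMk_left hs

lemma aux_repr {T : Type*} [MeasureSpace T]
    (hk : AEMeasurable (fun u : ℝ => Measure.map (Prod.mk u) (volume : Measure T)) volume)
    (φ : ℝ × T → ℝ) (hφ0 : ∀ p, 0 ≤ φ p)
    (hφi : Integrable φ ((volume : Measure ℝ).prod (volume : Measure T))) :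
    (∫ p, φ p ∂((volume : Measure ℝ).prod (volume : Measure T)))
      = (∫⁻ u, ∫⁻ x, ENNReal.ofReal (φ (u, x)) ∂(volume : Measure T) ∂(volume : Measure ℝ)).toReal
    ∧ (∫⁻ u, ∫⁻ x, ENNReal.ofReal (φ (u, x)) ∂(volume : Measure T) ∂(volume : Measure ℝ)) ≠ ⊤
    ∧ (∀ᵐ u ∂(volume : Measure ℝ),
        (∫ x, φ (u, x) ∂(volume : Measure T))
          = (∫⁻ x, ENNReal.ofReal (φ (u, x)) ∂(volume : Measure T)).toReal
        ∧ (∫⁻ x, ENNReal.ofReal (φ (u, x)) ∂(volume : Measure T)) ≠ ⊤) := by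
  set ν : Measure T := volume with hν
  set μ : Measure (ℝ × T) := (volume : Measure ℝ).prod ν with hμd
  have hm : AEMeasurable φ μ := hφi.aemeasurable
  set g : ℝ × T → ℝ := hm.mk φ with hgdef
  have hg : Measurable g := hm.measurable_mk
  have hae : φ =ᵐ[μ] g := hm.ae_eq_mk
  obtain ⟨t, hsub, htm, ht0⟩ := exists_measurable_superset_of_null (ae_iff.mp hae)
  have hcoe : AEMeasurable (fun u => ν (Prod.mk u ⁻¹' t)) volume := by
    refine ((Measure.measurable_coe htm).comp_aemeasurable hk).congr
      (Filter.Eventually.of_forall fun u => ?_)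
    exact Measure.map_apply measurable_prodMk_left htm
  have hts : ∀ᵐ u ∂(volume : Measure ℝ), ν (Prod.mk u ⁻¹' t) = 0 := by
    refine (lintegral_eq_zero_iff' hcoe).mp ?_
    rw [← prod_apply_aemeas hk htm]; exact ht0
  have hslice : ∀ᵐ u ∂(volume : Measure ℝ),
      (fun x => φ (u, x)) =ᵐ[ν] (fun x => g (u, x)) := by
    filter_upwards [hts] with u hu
    refine ae_iff.mpr (measure_mono_null (fun x hx => ?_) hu)
    exact hsub hx
  have hgm : Measurable fun p => ENNReal.ofReal (g p) := ENNReal.measurable_ofReal.comp hg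
  have hFub : ∫⁻ p, ENNReal.ofReal (g p) ∂μ
      = ∫⁻ u, ∫⁻ x, ENNReal.ofReal (g (u, x)) ∂ν ∂(volume : Measure ℝ) :=
    lintegral_prod_aemeas hk hgm
  have htot : ∫⁻ p, ENNReal.ofReal (φ p) ∂μ = ∫⁻ p, ENNReal.ofReal (g p) ∂μ :=
    lintegral_congr_ae (hae.mono fun p hp => congrArg ENNReal.ofReal hp)
  have houter : (∫⁻ u, ∫⁻ x, ENNReal.ofReal (φ (u, x)) ∂ν ∂(volume : Measure ℝ))
      = ∫⁻ u, ∫⁻ x, ENNReal.ofReal (g (u, x)) ∂ν ∂(volume : Measure ℝ) := by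
    refine lintegral_congr_ae ?_
    filter_upwards [hslice] with u hu
    exact lintegral_congr_ae (hu.mono fun x hx => congrArg ENNReal.ofReal hx)
  have hfin : ∫⁻ p, ENNReal.ofReal (φ p) ∂μ ≠ ⊤ :=
    ((hasFiniteIntegral_iff_ofReal (Filter.Eventually.of_forall hφ0)).mp hφi.2).ne
  have hiterfin : (∫⁻ u, ∫⁻ x, ENNReal.ofReal (φ (u, x)) ∂ν ∂(volume : Measure ℝ)) ≠ ⊤ := by
    rw [houter, ← hFub, ← htot]; exact hfin
  refine ⟨?_, hiterfin, ?_⟩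
  · rw [integral_eq_lintegral_of_nonneg_ae (Filter.Eventually.of_forall hφ0)
      hφi.aestronglyMeasurable, htot, hFub, ← houter]
  · have hLgmeas : AEMeasurable (fun u => ∫⁻ x, ENNReal.ofReal (g (u, x)) ∂ν) volume := by
      refine ((Measure.measurable_lintegral hgm).comp_aemeasurable hk).congr
        (Filter.Eventually.of_forall fun u => ?_)
      exact lintegral_map hgm measurable_prodMk_left
    have hae_top : ∀ᵐ u ∂(volume : Measure ℝ),
        (∫⁻ x, ENNReal.ofReal (g (u, x)) ∂ν) < ⊤ := by
      refine ae_lt_top' hLgmeas ?_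
      rw [← hFub, ← htot]; exact hfin
    filter_upwards [hslice, hae_top] with u hu hu2
    have hLeq : ∫⁻ x, ENNReal.ofReal (φ (u, x)) ∂ν = ∫⁻ x, ENNReal.ofReal (g (u, x)) ∂ν :=
      lintegral_congr_ae (hu.mono fun x hx => congrArg ENNReal.ofReal hx)
    have hsm : AEStronglyMeasurable (fun x => φ (u, x)) ν :=
      ((hg.comp measurable_prodMk_left).stronglyMeasurable.aestronglyMeasurable).congr hu.symm
    constructor
    · exact integral_eq_lintegral_of_nonneg_ae (Filter.Eventually.of_forall fun x => hφ0 _) hsm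
    · rw [hLeq]; exact hu2.ne

lemma key_compare {T : Type*} [MeasureSpace T]
    (hk : AEMeasurable (fun u : ℝ => Measure.map (Prod.mk u) (volume : Measure T)) volume)
    (φ ψ : ℝ × T → ℝ) (hφ0 : ∀ p, 0 ≤ φ p) (hψ0 : ∀ p, 0 ≤ ψ p)
    (hφi : Integrable φ ((volume : Measure ℝ).prod (volume : Measure T)))
    (hψi : Integrable ψ ((volume : Measure ℝ).prod (volume : Measure T)))
    (hle : ∀ u : ℝ, (∫ x : T, φ (u, x)) ≤ ∫ x : T, ψ (u, x)) :
    ∫ p, φ p ∂((volume : Measure ℝ).prod (volume : Measure T))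
      ≤ ∫ p, ψ p ∂((volume : Measure ℝ).prod (volume : Measure T)) := by
  obtain ⟨hφeq, hφfin, hφae⟩ := aux_repr hk φ hφ0 hφi
  obtain ⟨hψeq, hψfin, hψae⟩ := aux_repr hk ψ hψ0 hψi
  rw [hφeq, hψeq]
  refine ENNReal.toReal_mono hψfin (lintegral_mono_ae ?_)
  filter_upwards [hφae, hψae] with u ⟨hφ1, hφ2⟩ ⟨hψ1, hψ2⟩
  have := hle u
  rw [hφ1, hψ1] at this
  exact (ENNReal.toReal_le_toReal hφ2 hψ2).mp this


/-- On a half-cylinder `[a,∞) × T` over a flat torus `T` (with `e^{2a} > 32`),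
for smooth compactly supported `f, g, h` whose tangential Laplacians satisfy
`∫_T Δ_T φ · conj φ ≥ ∫_T |φ|²` slicewise, one has
`∫ (e^{2u}−16)(Δ_T f·conj f + Δ_T g·conj g) + 4∫ Re(∂ₓh·conj f + ∂_yh·conj g)
 + ∫ |∇_T h|² ≥ 0`.
Here `F, G, Hfun` play the role of `f, g, h`; `Hx, Hy` are `∂ₓh, ∂_yh`;
`DTf, DTg, DTh` are the pointwise quantities `|∇_T f|², |∇_T g|², |∇_T h|²`
(so that `∫_T Δ_T φ · conj φ = ∫_T |∇_T φ|²` by integration by parts). -/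
theorem half_cylinder_cross_term_nonneg
    {T : Type*} [MeasureSpace T]
    (a : ℝ) (ha : 32 < Real.exp (2 * a))
    (F G Hfun Hx Hy : ℝ × T → ℂ) (DTf DTg DTh : ℝ × T → ℝ)
    (μ : Measure (ℝ × T)) (hμ : μ = (volume : Measure ℝ).prod (volume : Measure T))
    -- compact support, contained in `u ≥ a`
    (hsupp : ∀ p : ℝ × T, p.1 < a →
      F p = 0 ∧ G p = 0 ∧ Hfun p = 0 ∧ Hx p = 0 ∧ Hy p = 0 ∧
      DTf p = 0 ∧ DTg p = 0 ∧ DTh p = 0)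
    -- `|∇_T φ|² ≥ 0` pointwise
    (hDTf0 : ∀ p, 0 ≤ DTf p) (hDTg0 : ∀ p, 0 ≤ DTg p) (hDTh0 : ∀ p, 0 ≤ DTh p)
    -- `|∇_T h|² = |∂ₓ h|² + |∂_y h|²`
    (hDTh : ∀ p, DTh p = ‖Hx p‖ ^ 2 + ‖Hy p‖ ^ 2)
    -- slicewise: `∫_T Δ_T f · conj f ≥ ∫_T |f|²`, and likewise for `g`, `h`
    (hf : ∀ u : ℝ, (∫ x : T, ‖F (u, x)‖ ^ 2) ≤ ∫ x : T, DTf (u, x))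
    (hg : ∀ u : ℝ, (∫ x : T, ‖G (u, x)‖ ^ 2) ≤ ∫ x : T, DTg (u, x))
    (hh : ∀ u : ℝ, (∫ x : T, ‖Hfun (u, x)‖ ^ 2) ≤ ∫ x : T, DTh (u, x))
    -- integrability of all relevant quantities on the half-cylinder
    (hi1 : Integrable (fun p => (Real.exp (2 * p.1) - 16) * (DTf p + DTg p)) μ)
    (hi2 : Integrable (fun p => ((Hx p) * (starRingEnd ℂ) (F p)
      + (Hy p) * (starRingEnd ℂ) (G p)).re) μ)
    (hi3 : Integrable DTh μ) (hi4 : Integrable DTf μ) (hi5 : Integrable DTg μ)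
    (hi6 : Integrable (fun p => ‖F p‖ ^ 2) μ) (hi7 : Integrable (fun p => ‖G p‖ ^ 2) μ) :
    0 ≤ (∫ p, (Real.exp (2 * p.1) - 16) * (DTf p + DTg p) ∂μ)
      + 4 * (∫ p, ((Hx p) * (starRingEnd ℂ) (F p)
          + (Hy p) * (starRingEnd ℂ) (G p)).re ∂μ)
      + ∫ p, (‖Hx p‖ ^ 2 + ‖Hy p‖ ^ 2) ∂μ := by
  by_cases hk : AEMeasurable (fun u : ℝ => Measure.map (Prod.mk u) (volume : Measure T)) volume
  swap
  · have hz : μ = 0 := by rw [hμ]; exact prod_zero_of_not_aemeas hk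
    rw [hz]
    simp
  -- the H-squared integrand is integrable
  have hDTh' : (fun p => ‖Hx p‖ ^ 2 + ‖Hy p‖ ^ 2) = DTh := funext fun p => (hDTh p).symm
  have hi3' : Integrable (fun p => ‖Hx p‖ ^ 2 + ‖Hy p‖ ^ 2) μ := hDTh' ▸ hi3
  -- comparison of squares with the gradient terms via slicewise hypotheses
  have A2 : ∫ p, ‖F p‖ ^ 2 ∂μ ≤ ∫ p, DTf p ∂μ := by
    rw [hμ] at hi6 hi4 ⊢
    exact key_compare hk _ _ (fun p => by positivity) hDTf0 hi6 hi4 hf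
  have A3 : ∫ p, ‖G p‖ ^ 2 ∂μ ≤ ∫ p, DTg p ∂μ := by
    rw [hμ] at hi7 hi5 ⊢
    exact key_compare hk _ _ (fun p => by positivity) hDTg0 hi7 hi5 hg
  -- pointwise lower bound for the cross term
  have hpt : ∀ p : ℝ × T,
      -(16 * ‖F p‖ ^ 2 + 16 * ‖G p‖ ^ 2 + (‖Hx p‖ ^ 2 + ‖Hy p‖ ^ 2))
        ≤ 4 * ((Hx p * (starRingEnd ℂ) (F p) + Hy p * (starRingEnd ℂ) (G p)).re) := by
    intro p
    have h1 : -(‖Hx p‖ * ‖F p‖) ≤ (Hx p * (starRingEnd ℂ) (F p)).re := by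
      have h := (abs_le.mp (Complex.abs_re_le_norm (Hx p * (starRingEnd ℂ) (F p)))).1
      have hn : ‖Hx p * (starRingEnd ℂ) (F p)‖ = ‖Hx p‖ * ‖F p‖ := by
        rw [norm_mul, Complex.norm_conj]
      linarith [hn ▸ h]
    have h2 : -(‖Hy p‖ * ‖G p‖) ≤ (Hy p * (starRingEnd ℂ) (G p)).re := by
      have h := (abs_le.mp (Complex.abs_re_le_norm (Hy p * (starRingEnd ℂ) (G p)))).1
      have hn : ‖Hy p * (starRingEnd ℂ) (G p)‖ = ‖Hy p‖ * ‖G p‖ := by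
        rw [norm_mul, Complex.norm_conj]
      linarith [hn ▸ h]
    have e1 := sq_nonneg (4 * ‖F p‖ - ‖Hx p‖)
    have e2 := sq_nonneg (4 * ‖G p‖ - ‖Hy p‖)
    simp only [Complex.add_re]
    nlinarith [norm_nonneg (F p), norm_nonneg (G p), norm_nonneg (Hx p), norm_nonneg (Hy p)]
  have intL : Integrable
      (fun p => -(16 * ‖F p‖ ^ 2 + 16 * ‖G p‖ ^ 2 + (‖Hx p‖ ^ 2 + ‖Hy p‖ ^ 2))) μ :=
    (((hi6.const_mul 16).add (hi7.const_mul 16)).add hi3').neg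
  have A4 : ∫ p, -(16 * ‖F p‖ ^ 2 + 16 * ‖G p‖ ^ 2 + (‖Hx p‖ ^ 2 + ‖Hy p‖ ^ 2)) ∂μ
      ≤ ∫ p, 4 * ((Hx p * (starRingEnd ℂ) (F p) + Hy p * (starRingEnd ℂ) (G p)).re) ∂μ :=
    integral_mono intL (hi2.const_mul 4) hpt
  have i1' : Integrable (fun p => 16 * ‖F p‖ ^ 2) μ := hi6.const_mul 16
  have i2' : Integrable (fun p => 16 * ‖G p‖ ^ 2) μ := hi7.const_mul 16
  have iFG : Integrable (fun p => 16 * ‖F p‖ ^ 2 + 16 * ‖G p‖ ^ 2) μ := i1'.add i2'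
  have e4 : ∫ p, -(16 * ‖F p‖ ^ 2 + 16 * ‖G p‖ ^ 2 + (‖Hx p‖ ^ 2 + ‖Hy p‖ ^ 2)) ∂μ
      = -(16 * (∫ p, ‖F p‖ ^ 2 ∂μ) + 16 * (∫ p, ‖G p‖ ^ 2 ∂μ)
          + ∫ p, (‖Hx p‖ ^ 2 + ‖Hy p‖ ^ 2) ∂μ) := by
    rw [integral_neg, integral_add iFG hi3', integral_add i1' i2',
      integral_const_mul, integral_const_mul]
  have e5 : ∫ p, 4 * ((Hx p * (starRingEnd ℂ) (F p) + Hy p * (starRingEnd ℂ) (G p)).re) ∂μ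
      = 4 * ∫ p, ((Hx p * (starRingEnd ℂ) (F p) + Hy p * (starRingEnd ℂ) (G p)).re) ∂μ :=
    integral_const_mul 4 _
  -- main weight inequality
  have hpt1 : ∀ p : ℝ × T,
      16 * DTf p + 16 * DTg p ≤ (Real.exp (2 * p.1) - 16) * (DTf p + DTg p) := by
    intro p
    by_cases hp : p.1 < a
    · obtain ⟨-, -, -, -, -, h6, h7, -⟩ := hsupp p hp
      rw [h6, h7]; norm_num
    · push_neg at hp
      have hexp : Real.exp (2 * a) ≤ Real.exp (2 * p.1) :=
        Real.exp_le_exp.mpr (by linarith)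
      nlinarith [hDTf0 p, hDTg0 p]
  have A1 : ∫ p, (16 * DTf p + 16 * DTg p) ∂μ
      ≤ ∫ p, (Real.exp (2 * p.1) - 16) * (DTf p + DTg p) ∂μ :=
    integral_mono ((hi4.const_mul 16).add (hi5.const_mul 16)) hi1 hpt1
  have e6 : ∫ p, (16 * DTf p + 16 * DTg p) ∂μ
      = 16 * (∫ p, DTf p ∂μ) + 16 * (∫ p, DTg p ∂μ) := by
    have i3' : Integrable (fun p => 16 * DTf p) μ := hi4.const_mul 16
    have i4' : Integrable (fun p => 16 * DTg p) μ := hi5.const_mul 16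
    rw [integral_add i3' i4', integral_const_mul, integral_const_mul]
  rw [e6] at A1
  rw [e4, e5] at A4
  linarith
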